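/- arXiv:1707.02281 — 7 statements merged into one kernel-verified Lean document; each statement's English description precedes it below -/
import Mathlib

section
/- Let g ∈ P_d be a sandpile polynomial and define f by f_n = |g_n| for all n ∈ Z^d. Then the product h = f·g is again a sandpile polynomial, i.e., h ∈ P_d. -/
open Finset Pointwise

/-- Laurent polynomials with integer coefficients in `d` variables, identified with
finitely supported functions `ℤ^d → ℤ`. A sandpile polynomial satisfies `h 0 > 0`,
`h j ≤ 0` for `j ≠ 0`, and `Σ_j h_j > 0` (equivalently `2 h_0 > Σ_j |h_j| > 0`). -/
def IsSandpileFun {d : ℕ} (h : (Fin d → ℤ) → ℤ) : Prop :=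
  (Function.support h).Finite ∧ 0 < h 0 ∧ (∀ j : Fin d → ℤ, j ≠ 0 → h j ≤ 0) ∧
    0 < ∑ᶠ j, h j

/-- If `g` is a sandpile polynomial and `f` is defined by `f n = |g n|`, then the
product (convolution) `h = f · g`, with `h n = Σ_k f k * g (n - k)`, is again a
sandpile polynomial. -/
theorem stmt1 {d : ℕ} (g : (Fin d → ℤ) →₀ ℤ)
    (hg : IsSandpileFun (g : (Fin d → ℤ) → ℤ)) :
    IsSandpileFun (fun n : Fin d → ℤ => ∑ k ∈ g.support, |g k| * g (n - k)) := by
  classical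
  obtain ⟨-, hg0, hgneg, hgsum⟩ := hg
  set A := g.support with hA
  have h0A : (0 : Fin d → ℤ) ∈ A := Finsupp.mem_support_iff.2 (ne_of_gt hg0)
  set T : ℤ := ∑ k ∈ A.erase 0, |g k| with hT
  have hTnn : 0 ≤ T := Finset.sum_nonneg fun k _ => abs_nonneg _
  have habs : ∀ k ∈ A.erase 0, g k = -|g k| := by
    intro k hk
    rw [abs_of_nonpos (hgneg k (Finset.mem_erase.1 hk).1), neg_neg]
  have hsum_g : ∑ k ∈ A, g k = g 0 - T := by
    rw [← Finset.add_sum_erase A g h0A, Finset.sum_congr rfl habs,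
      Finset.sum_neg_distrib]
    ring
  have hS : 0 < g 0 - T := by
    rw [← hsum_g]
    have heq : ∑ᶠ j, (g : (Fin d → ℤ) → ℤ) j = ∑ k ∈ A, g k :=
      finsum_eq_finset_sum_of_support_subset _ (by rw [Finsupp.fun_support_eq])
    rw [← heq]; exact hgsum
  have hsum_abs : ∑ k ∈ A, |g k| = g 0 + T := by
    rw [← Finset.add_sum_erase A _ h0A, abs_of_pos hg0]
  -- bound on g(-k)
  have hgk_lb : ∀ k : Fin d → ℤ, k ≠ 0 → -T ≤ g k := by
    intro k hk
    by_cases hkA : k ∈ A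
    · have hkA' : k ∈ A.erase 0 := Finset.mem_erase.2 ⟨hk, hkA⟩
      have hle : |g k| ≤ T := by
        simpa [hT] using Finset.single_le_sum (f := fun k => |g k|)
          (fun i _ => abs_nonneg (g i)) hkA'
      rw [habs k hkA']
      omega
    · rw [Finsupp.notMem_support_iff.1 hkA]
      omega
  -- support
  have hsupp : Function.support
      (fun n : Fin d → ℤ => ∑ k ∈ A, |g k| * g (n - k)) ⊆ ↑(A + A) := by
    intro n hn
    obtain ⟨k, hkA, hk⟩ := Finset.exists_ne_zero_of_sum_ne_zero hn
    have hnk : n - k ∈ A := Finsupp.mem_support_iff.2 fun h => by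
      rw [h, mul_zero] at hk; exact hk rfl
    have hmem : k + (n - k) ∈ A + A := Finset.add_mem_add hkA hnk
    have hkn : k + (n - k) = n := by abel
    rw [hkn] at hmem
    exact Finset.mem_coe.2 hmem
  refine ⟨Set.Finite.subset (A + A).finite_toSet hsupp, ?_, ?_, ?_⟩
  · -- h 0 > 0
    simp only
    rw [← Finset.add_sum_erase A _ h0A]
    have hb : ∀ k ∈ A.erase 0, |g k| * (-T) ≤ |g k| * g (0 - k) := by
      intro k hk
      refine mul_le_mul_of_nonneg_left ?_ (abs_nonneg _)
      apply hgk_lb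
      simp [(Finset.mem_erase.1 hk).1]
    have := Finset.sum_le_sum hb
    rw [← Finset.sum_mul] at this
    have h00 : (0 : Fin d → ℤ) - 0 = 0 := by simp
    rw [h00, abs_of_pos hg0]
    nlinarith [hg0, hTnn, hS]
  · -- h n ≤ 0 for n ≠ 0
    intro n hn
    simp only
    by_cases hnA : n ∈ A
    · have hnA' : n ∈ A.erase 0 := Finset.mem_erase.2 ⟨hn, hnA⟩
      rw [← Finset.add_sum_erase A _ h0A, ← Finset.add_sum_erase _ _ hnA']
      have h1 : |g 0| * g (n - 0) + |g n| * g (n - n) = 0 := by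
        rw [sub_zero, sub_self, abs_of_pos hg0, abs_of_nonpos (hgneg n hn)]
        ring
      have h2 : ∑ k ∈ (A.erase 0).erase n, |g k| * g (n - k) ≤ 0 := by
        apply Finset.sum_nonpos
        intro k hk
        have hk1 : k ≠ n := (Finset.mem_erase.1 hk).1
        have hnk : n - k ≠ 0 := fun h => hk1 (by
          have : n = k := by
            funext i
            have := congrFun h i
            simp at this ⊢
            omega
          exact this.symm)
        exact mul_nonpos_of_nonneg_of_nonpos (abs_nonneg _) (hgneg _ hnk)
      omega
    · apply Finset.sum_nonpos
      intro k hk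
      have hnk : n - k ≠ 0 := fun h => by
        have : n = k := by
          funext i
          have := congrFun h i
          simp at this ⊢
          omega
        exact hnA (this ▸ hk)
      exact mul_nonpos_of_nonneg_of_nonpos (abs_nonneg _) (hgneg _ hnk)
  · -- total sum positive
    rw [finsum_eq_finset_sum_of_support_subset _ hsupp]
    rw [Finset.sum_comm]
    have hinner : ∀ k ∈ A, ∑ n ∈ A + A, |g k| * g (n - k) = |g k| * (g 0 - T) := by
      intro k hkA
      rw [← Finset.mul_sum, ← hsum_g]
      congr 1
      have himg : A ⊆ (A + A).image (· - k) := by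
        intro m hm
        apply Finset.mem_image.2
        exact ⟨m + k, Finset.add_mem_add hm hkA, by simp⟩
      have hinj : ∑ n ∈ A + A, g (n - k) = ∑ m ∈ (A + A).image (· - k), g m :=
        (Finset.sum_image (by intro a _ b _ h; simpa using h)).symm
      rw [hinj]
      exact (Finset.sum_subset himg fun m _ hmA =>
        Finsupp.notMem_support_iff.1 hmA).symm
    rw [Finset.sum_congr rfl hinner, ← Finset.sum_mul, hsum_abs]
    positivity
end

section
/- Let A be a real n×n matrix that is strictly diagonally dominant, i.e., |A_{ii}| > Σ_{j≠i} |A_{ij}| for every i. Then A is invertible and the operator norm of A^{-1} induced by the maximum norm satisfies ‖A^{-1}‖_∞ ≤ max_i 1/(|A_{ii}| − Σ_{j≠i} |A_{ij}|). -/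
open Finset

attribute [local instance] Matrix.linftyOpNormedAddCommGroup

/-- Varah's bound: a strictly diagonally dominant real matrix `A`
(`Σ_{j ≠ i} |A i j| < |A i i|` for every `i`) is invertible, and the operator norm of
`A⁻¹` induced by the maximum norm (the `L∞` operator norm, `‖M‖ = max_i Σ_j |M i j|`)
satisfies `‖A⁻¹‖ ≤ max_i (|A i i| - Σ_{j ≠ i} |A i j|)⁻¹`. -/
theorem stmt4 {n : ℕ} (A : Matrix (Fin n) (Fin n) ℝ)
    (hdd : ∀ i, ∑ j ∈ univ.erase i, |A i j| < |A i i|) :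
    IsUnit A ∧ ‖A⁻¹‖ ≤ ⨆ i, (|A i i| - ∑ j ∈ univ.erase i, |A i j|)⁻¹ := by
  have hdet : A.det ≠ 0 := by
    apply det_ne_zero_of_sum_row_lt_diag
    simpa [Real.norm_eq_abs] using hdd
  have hUnit : IsUnit A := (Matrix.isUnit_iff_isUnit_det A).2 (isUnit_iff_ne_zero.2 hdet)
  refine ⟨hUnit, ?_⟩
  rcases Nat.eq_zero_or_pos n with hn | hn
  · subst hn
    have h1 : ‖A⁻¹‖ = 0 := by
      rw [Matrix.linfty_opNorm_def]
      simp
    rw [h1, Real.iSup_of_isEmpty]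
  · have : Nonempty (Fin n) := ⟨⟨0, hn⟩⟩
    set d : Fin n → ℝ := fun i => |A i i| - ∑ j ∈ univ.erase i, |A i j| with hd
    have hdpos : ∀ i, 0 < d i := fun i => sub_pos.2 (hdd i)
    set C : ℝ := ⨆ i, (d i)⁻¹ with hC
    have hle : ∀ i, (d i)⁻¹ ≤ C := fun i =>
      le_ciSup (f := fun i => (d i)⁻¹) (Set.Finite.bddAbove (Set.finite_range _)) i
    have hC0 : 0 ≤ C := le_trans (le_of_lt (inv_pos.2 (hdpos (Classical.arbitrary _)))) (hle _)
    rw [Matrix.linfty_opNorm_eq_opNorm]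
    apply ContinuousLinearMap.opNorm_le_bound _ hC0
    intro y
    simp only [ContinuousLinearMap.coe_mk', Matrix.mulVecLin_apply]
    set x : Fin n → ℝ := Matrix.mulVec A⁻¹ y with hx
    have hAx : Matrix.mulVec A x = y := by
      rw [hx, Matrix.mulVec_mulVec, Matrix.mul_nonsing_inv A (isUnit_iff_ne_zero.2 hdet), Matrix.one_mulVec]
    -- choose i maximizing |x i|
    obtain ⟨i, -, hi⟩ := Finset.exists_mem_eq_sup (univ : Finset (Fin n))
      univ_nonempty (fun i => ‖x i‖₊)
    have hxi : ‖x‖ = |x i| := by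
      rw [Pi.norm_def, hi]; simp [Real.norm_eq_abs]
    have hxj : ∀ j, |x j| ≤ |x i| := by
      intro j
      have := norm_le_pi_norm x j
      rw [hxi] at this; simpa [Real.norm_eq_abs] using this
    -- key inequality: d i * |x i| ≤ |y i|
    have hyi : y i = A i i * x i + ∑ j ∈ univ.erase i, A i j * x j := by
      rw [← hAx]
      simp only [Matrix.mulVec, dotProduct]
      rw [Finset.sum_erase_eq_sub (Finset.mem_univ i)]
      ring
    have key : d i * |x i| ≤ |y i| := by
      have h1 : |A i i * x i| ≤ |y i| + ∑ j ∈ univ.erase i, |A i j * x j| := by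
        calc |A i i * x i| = |y i - ∑ j ∈ univ.erase i, A i j * x j| := by rw [hyi]; ring_nf
        _ ≤ |y i| + |∑ j ∈ univ.erase i, A i j * x j| := abs_sub _ _
        _ ≤ |y i| + ∑ j ∈ univ.erase i, |A i j * x j| :=
            add_le_add_right (Finset.abs_sum_le_sum_abs _ _) _
      have h2 : ∑ j ∈ univ.erase i, |A i j * x j| ≤ (∑ j ∈ univ.erase i, |A i j|) * |x i| := by
        rw [Finset.sum_mul]
        refine Finset.sum_le_sum fun j _ => ?_
        rw [abs_mul]
        exact mul_le_mul_of_nonneg_left (hxj j) (abs_nonneg _)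
      have := h1.trans (add_le_add_right h2 _)
      rw [abs_mul] at this
      show (|A i i| - ∑ j ∈ univ.erase i, |A i j|) * |x i| ≤ |y i|
      nlinarith [abs_nonneg (x i)]
    have hyile : |y i| ≤ ‖y‖ := by
      have := norm_le_pi_norm y i; simpa [Real.norm_eq_abs] using this
    rw [hxi]
    calc |x i| ≤ (d i)⁻¹ * |y i| := by
          rw [le_inv_mul_iff₀ (hdpos i)]; exact key
    _ ≤ C * ‖y‖ := mul_le_mul (hle i) hyile (abs_nonneg _) hC0
end

section
/- Let g ∈ P_d be a sandpile polynomial with associated polynomial f ∈ P_d^+ given by f_n = |g_n|, and let F ⊂ Z^d be finite. Then the matrix Δ' = Δ^g Δ^f (product of the toppling matrices of g and f on F) satisfies Δ'_{ij} ≤ 0 for all i ≠ j in F, and Σ_{j∈F} Δ'_{ij} > 0 for all i ∈ F; hence Δ' is a toppling matrix. -/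
/-- A sandpile polynomial: `g 0 > 0`, `g j ≤ 0` for `j ≠ 0`, and `Σ_j g_j > 0`. -/
def IsSandpile {d : ℕ} (g : (Fin d → ℤ) →₀ ℤ) : Prop :=
  0 < g 0 ∧ (∀ j : Fin d → ℤ, j ≠ 0 → g j ≤ 0) ∧ 0 < ∑ j ∈ g.support, g j

/-- Summing `|g (i - j)|` over a finite set is at most the total sum of `|g|`. -/
lemma sum_abs_shift_le {d : ℕ} (g : (Fin d → ℤ) →₀ ℤ) (E : Finset (Fin d → ℤ))
    (i : Fin d → ℤ) : ∑ j ∈ E, |g (i - j)| ≤ ∑ m ∈ g.support, |g m| := by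
  have hinj : ∀ x ∈ E, ∀ y ∈ E, i - x = i - y → x = y := fun a _ b _ h =>
    sub_right_injective h
  have him : ∑ n ∈ E.image (fun j => i - j), |g n| = ∑ j ∈ E, |g (i - j)| :=
    Finset.sum_image hinj
  rw [← him]
  set I := E.image (fun j => i - j) with hI
  have h1 : ∑ n ∈ I ∩ g.support, |g n| = ∑ n ∈ I, |g n| := by
    apply Finset.sum_subset Finset.inter_subset_left
    intro x hx hnx
    have : x ∉ g.support := fun h => hnx (Finset.mem_inter.mpr ⟨hx, h⟩)
    simp [Finsupp.notMem_support_iff.mp this]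
  rw [← h1]
  exact Finset.sum_le_sum_of_subset_of_nonneg Finset.inter_subset_right
    (fun m _ _ => abs_nonneg _)

/-- Off-origin version: if `i ∉ E`, the shifts avoid `0`. -/
lemma sum_abs_shift_le_erase {d : ℕ} (g : (Fin d → ℤ) →₀ ℤ) (E : Finset (Fin d → ℤ))
    (i : Fin d → ℤ) (hiE : i ∉ E) :
    ∑ j ∈ E, |g (i - j)| ≤ ∑ m ∈ g.support.erase 0, |g m| := by
  have hinj : ∀ x ∈ E, ∀ y ∈ E, i - x = i - y → x = y := fun a _ b _ h =>
    sub_right_injective h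
  have him : ∑ n ∈ E.image (fun j => i - j), |g n| = ∑ j ∈ E, |g (i - j)| :=
    Finset.sum_image hinj
  rw [← him]
  set I := E.image (fun j => i - j) with hI
  have h1 : ∑ n ∈ I ∩ g.support.erase 0, |g n| = ∑ n ∈ I, |g n| := by
    apply Finset.sum_subset Finset.inter_subset_left
    intro x hx hnx
    by_cases hx0 : x = 0
    · subst hx0
      exfalso
      rcases Finset.mem_image.mp hx with ⟨a, ha, hax⟩
      exact hiE ((sub_eq_zero.mp hax) ▸ ha)
    · by_cases hxs : x ∈ g.support
      · exact absurd (Finset.mem_inter.mpr ⟨hx, Finset.mem_erase.mpr ⟨hx0, hxs⟩⟩) hnx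
      · simp [Finsupp.notMem_support_iff.mp hxs]
  rw [← h1]
  exact Finset.sum_le_sum_of_subset_of_nonneg Finset.inter_subset_right
    (fun m _ _ => abs_nonneg _)

/-- Let `g` be a sandpile polynomial with associated polynomial `f`, `f n = |g n|`, and
let `F ⊂ ℤ^d` be finite. Then the matrix `Δ' = Δ^g Δ^f`, i.e.
`Δ'_{ij} = Σ_{k ∈ F} g (i - k) * f (k - j)`, satisfies `Δ'_{ij} ≤ 0` for all `i ≠ j`
in `F` and `Σ_{j ∈ F} Δ'_{ij} > 0` for all `i ∈ F`; hence `Δ'` is a toppling matrix. -/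
theorem stmt5 {d : ℕ} (g : (Fin d → ℤ) →₀ ℤ) (hg : IsSandpile g)
    (f : (Fin d → ℤ) → ℤ) (hf : ∀ n, f n = |g n|)
    (F : Finset (Fin d → ℤ)) :
    (∀ i ∈ F, ∀ j ∈ F, i ≠ j → (∑ k ∈ F, g (i - k) * f (k - j)) ≤ 0) ∧
    (∀ i ∈ F, 0 < ∑ j ∈ F, ∑ k ∈ F, g (i - k) * f (k - j)) := by
  obtain ⟨hg0, hneg, hsum⟩ := hg
  constructor
  · intro i hi j hj hij
    simp_rw [hf]
    set t : (Fin d → ℤ) → ℤ := fun k => g (i - k) * |g (k - j)| with ht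
    have hjF : j ∈ F.erase i := Finset.mem_erase.mpr ⟨fun h => hij h.symm, hj⟩
    have h1 : ∑ k ∈ F, t k = t i + (t j + ∑ k ∈ (F.erase i).erase j, t k) := by
      rw [Finset.add_sum_erase _ t hjF, Finset.add_sum_erase _ t hi]
    have hij0 : i - j ≠ 0 := sub_ne_zero.mpr hij
    have htij : t i + t j = 0 := by
      have h2 : |g (i - j)| = -(g (i - j)) := abs_of_nonpos (hneg _ hij0)
      have h3 : |g 0| = g 0 := abs_of_pos hg0
      simp only [ht, sub_self, h3, h2]
      ring
    have hrest : ∑ k ∈ (F.erase i).erase j, t k ≤ 0 := by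
      apply Finset.sum_nonpos
      intro k hk
      have hki : k ≠ i := (Finset.mem_erase.mp (Finset.mem_erase.mp hk).2).1
      exact mul_nonpos_of_nonpos_of_nonneg
        (hneg _ (sub_ne_zero.mpr (Ne.symm hki)))
        (abs_nonneg _)
    linarith [h1, htij, hrest]
  · intro i hi
    simp_rw [hf]
    rw [Finset.sum_comm]
    simp_rw [← Finset.mul_sum]
    set S : (Fin d → ℤ) → ℤ := fun k => ∑ j ∈ F, |g (k - j)| with hS
    set T : ℤ := ∑ m ∈ g.support, |g m| with hT
    set B : ℤ := ∑ m ∈ g.support.erase 0, |g m| with hB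
    set A : ℤ := ∑ k ∈ F.erase i, |g (i - k)| with hA
    have h0supp : (0 : Fin d → ℤ) ∈ g.support := Finsupp.mem_support_iff.mpr hg0.ne'
    have hTB : T = g 0 + B := by
      rw [hT, hB, ← Finset.add_sum_erase _ _ h0supp, abs_of_pos hg0]
    have hBg0 : B < g 0 := by
      have h4 : ∑ m ∈ g.support.erase 0, g m = -B := by
        rw [hB, ← Finset.sum_neg_distrib]
        apply Finset.sum_congr rfl
        intro m hm
        rw [abs_of_nonpos (hneg _ (Finset.mem_erase.mp hm).1), neg_neg]
      have h5 : ∑ m ∈ g.support, g m = g 0 + ∑ m ∈ g.support.erase 0, g m :=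
        (Finset.add_sum_erase _ _ h0supp).symm
      rw [h5, h4] at hsum
      linarith
    have hAB : A ≤ B := sum_abs_shift_le_erase g (F.erase i) i (Finset.notMem_erase i F)
    have hAnn : 0 ≤ A := Finset.sum_nonneg fun _ _ => abs_nonneg _
    have hBnn : 0 ≤ B := Finset.sum_nonneg fun _ _ => abs_nonneg _
    have hSi : S i = g 0 + A := by
      rw [hS]
      simp only
      rw [← Finset.add_sum_erase _ _ hi, sub_self, abs_of_pos hg0, hA]
    have hsplit : ∑ k ∈ F, g (i - k) * S k
        = g 0 * S i + ∑ k ∈ F.erase i, g (i - k) * S k := by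
      rw [← Finset.add_sum_erase _ (fun k => g (i - k) * S k) hi, sub_self]
    have hbound : ∀ k ∈ F.erase i, g (i - k) * T ≤ g (i - k) * S k := by
      intro k hk
      have hki : i - k ≠ 0 := sub_ne_zero.mpr fun h =>
        (Finset.mem_erase.mp hk).1 h.symm
      exact mul_le_mul_of_nonpos_left (sum_abs_shift_le g F k) (hneg _ hki)
    have hsum2 : ∑ k ∈ F.erase i, g (i - k) * T ≤ ∑ k ∈ F.erase i, g (i - k) * S k :=
      Finset.sum_le_sum hbound
    have hnegsum : ∑ k ∈ F.erase i, g (i - k) = -A := by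
      rw [hA, ← Finset.sum_neg_distrib]
      apply Finset.sum_congr rfl
      intro k hk
      have hki : i - k ≠ 0 := sub_ne_zero.mpr fun h =>
        (Finset.mem_erase.mp hk).1 h.symm
      rw [abs_of_nonpos (hneg _ hki), neg_neg]
    have hsum3 : ∑ k ∈ F.erase i, g (i - k) * T = -A * T := by
      rw [← Finset.sum_mul, hnegsum]
    rw [hsplit, hSi]
    nlinarith [hsum2, hsum3, hTB, hBg0, hAB, hAnn, hBnn, hg0]
end

section
/- Let h = fg ∈ P_d with f,g ∈ R_d having no common factor, and suppose for every finite F the matrix Δ' = Δ^g Δ^f is a toppling matrix. Set γ' = Σ_{k ∈ G^+} f_k g_{−k}, where G^+ = {k : f_k g_{−k} > 0}. Then γ' ≥ γ_h > 0 and every recurrent configuration v ∈ R'_F satisfies 0 ≤ v_i ≤ γ' − 1 for all i ∈ F. -/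
/-- Recurrent configurations on a finite set `F` for a toppling kernel `Δ`, via the
burning algorithm: `v` is stable (`0 ≤ v i < Δ_{ii}` on `F`) and for every nonempty
`E ⊆ F` there exists `i ∈ E` with `v i ≥ -Σ_{j ∈ E, j ≠ i} Δ_{ji}`. -/
def IsRecurrentOn {d : ℕ} (Δ : (Fin d → ℤ) → (Fin d → ℤ) → ℤ)
    (F : Finset (Fin d → ℤ)) (v : (Fin d → ℤ) → ℤ) : Prop :=
  (∀ i ∈ F, 0 ≤ v i ∧ v i < Δ i i) ∧
  ∀ E : Finset (Fin d → ℤ), E ⊆ F → E.Nonempty →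
    ∃ i ∈ E, -∑ j ∈ E.erase i, Δ j i ≤ v i

/-- Let `h = f·g` be a sandpile polynomial, where `f` and `g` have no common factor,
and suppose for every finite `F` the matrix `Δ' = Δ^g Δ^f` is a toppling matrix. Set
`γ' = Σ_{k ∈ G⁺} f_k g_{-k}` where `G⁺ = {k : f_k g_{-k} > 0}`. Then
`γ' ≥ γ_h = h 0 > 0` and every recurrent configuration `v ∈ R'_F` satisfies
`0 ≤ v i ≤ γ' - 1` for all `i ∈ F`. -/
theorem stmt7 {d : ℕ} (f g : (Fin d → ℤ) →₀ ℤ)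
    (hsp : IsSandpileFun (fun n : Fin d → ℤ => ∑ k ∈ f.support, f k * g (n - k)))
    (hrp : IsRelPrime (show AddMonoidAlgebra ℤ (Fin d → ℤ) from AddMonoidAlgebra.ofCoeff f)
      (show AddMonoidAlgebra ℤ (Fin d → ℤ) from AddMonoidAlgebra.ofCoeff g))
    (htop : ∀ F : Finset (Fin d → ℤ),
      (∀ i ∈ F, ∀ j ∈ F, i ≠ j → (∑ k ∈ F, g (i - k) * f (k - j)) ≤ 0) ∧
      (∀ i ∈ F, 0 < ∑ j ∈ F, ∑ k ∈ F, g (i - k) * f (k - j))) :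
    (0 < ∑ k ∈ f.support, f k * g (0 - k)) ∧
    (∑ k ∈ f.support, f k * g (0 - k)) ≤
      (∑ k ∈ f.support.filter (fun k => 0 < f k * g (-k)), f k * g (-k)) ∧
    ∀ F : Finset (Fin d → ℤ), ∀ v : (Fin d → ℤ) → ℤ,
      IsRecurrentOn (fun i j => ∑ k ∈ F, g (i - k) * f (k - j)) F v →
      ∀ i ∈ F, 0 ≤ v i ∧
        v i ≤ (∑ k ∈ f.support.filter (fun k => 0 < f k * g (-k)), f k * g (-k)) - 1 := by
  have key : ∀ (F : Finset (Fin d → ℤ)) (i : Fin d → ℤ),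
      (∑ k ∈ F, g (i - k) * f (k - i)) ≤
        ∑ k ∈ f.support.filter (fun k => 0 < f k * g (-k)), f k * g (-k) := by
    intro F i
    set S := F.filter (fun k => 0 < g (i - k) * f (k - i)) with hS
    have h1 : (∑ k ∈ F, g (i - k) * f (k - i)) ≤ ∑ k ∈ S, g (i - k) * f (k - i) := by
      rw [← Finset.sum_filter_add_sum_filter_not F (fun k => 0 < g (i - k) * f (k - i))]
      have : (∑ k ∈ F.filter (fun k => ¬ 0 < g (i - k) * f (k - i)),
          g (i - k) * f (k - i)) ≤ 0 := by
        apply Finset.sum_nonpos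
        intro k hk
        simpa using (Finset.mem_filter.mp hk).2
      linarith
    have h2 : (∑ k ∈ S, g (i - k) * f (k - i)) =
        ∑ j ∈ S.image (fun k => k - i), f j * g (-j) := by
      rw [Finset.sum_image]
      · apply Finset.sum_congr rfl
        intro k _
        have : i - k = -(k - i) := by ring
        rw [this, mul_comm]
      · intro a _ b _ hab
        have := congrArg (· + i) hab
        simpa using this
    have h3 : S.image (fun k => k - i) ⊆ f.support.filter (fun k => 0 < f k * g (-k)) := by
      intro j hj
      obtain ⟨k, hk, rfl⟩ := Finset.mem_image.mp hj
      have hpos : 0 < g (i - k) * f (k - i) := (Finset.mem_filter.mp hk).2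
      have heq : g (i - k) * f (k - i) = f (k - i) * g (-(k - i)) := by
        rw [mul_comm]; congr 1; ring_nf
      rw [heq] at hpos
      refine Finset.mem_filter.mpr ⟨Finsupp.mem_support_iff.mpr ?_, hpos⟩
      intro h0; rw [h0] at hpos; simp at hpos
    have h4 : (∑ j ∈ S.image (fun k => k - i), f j * g (-j)) ≤
        ∑ k ∈ f.support.filter (fun k => 0 < f k * g (-k)), f k * g (-k) := by
      apply Finset.sum_le_sum_of_subset_of_nonneg h3
      intro j hj _
      exact le_of_lt (Finset.mem_filter.mp hj).2
    exact h1.trans (h2.le.trans h4)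
  have hγ : 0 < ∑ k ∈ f.support, f k * g (0 - k) := by simpa using hsp.2.1
  refine ⟨hγ, ?_, ?_⟩
  · rw [← Finset.sum_filter_add_sum_filter_not f.support (fun k => 0 < f k * g (-k))]
    have : (∑ k ∈ f.support.filter (fun k => ¬ 0 < f k * g (-k)), f k * g (0 - k)) ≤ 0 := by
      apply Finset.sum_nonpos
      intro k hk
      have := (Finset.mem_filter.mp hk).2
      simpa [zero_sub] using this
    have he : (∑ k ∈ f.support.filter (fun k => 0 < f k * g (-k)), f k * g (0 - k)) =
        ∑ k ∈ f.support.filter (fun k => 0 < f k * g (-k)), f k * g (-k) := by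
      apply Finset.sum_congr rfl; intro k _; rw [zero_sub]
    linarith
  · intro F v hv i hi
    obtain ⟨hst, _⟩ := hv
    obtain ⟨h0, hlt⟩ := hst i hi
    have hlt' : v i < ∑ k ∈ F, g (i - k) * f (k - i) := hlt
    exact ⟨h0, by have := key F i; omega⟩
end

section
/- Let g = 2 − u ∈ Z[u^{±1}] and h = −2u^{-1} + 5 − 2u. If u ∈ ℓ^∞(Z,Z) satisfies 0 ≤ 2u_n − u_{n−1} ≤ 4 for all n ∈ Z, then 0 ≤ u_n ≤ 4 for all n ∈ Z. -/
lemma aux_low (u : ℤ → ℤ)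
    (hgu : ∀ n : ℤ, 0 ≤ 2 * u n - u (n - 1) ∧ 2 * u n - u (n - 1) ≤ 4) :
    ∀ k : ℕ, ∀ n : ℤ, u n < 0 → u (n - k) ≤ u n - k := by
  intro k
  induction k with
  | zero => intro n h; simp
  | succ k ih =>
    intro n h
    have h1 := (hgu n).1
    have h2 : u (n - 1) ≤ u n - 1 := by omega
    have h3 : u (n - 1) < 0 := by omega
    have := ih (n - 1) h3
    have heq : n - ((k : ℤ) + 1) = n - 1 - k := by ring
    push_cast
    rw [heq]
    omega

lemma aux_high (u : ℤ → ℤ)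
    (hgu : ∀ n : ℤ, 0 ≤ 2 * u n - u (n - 1) ∧ 2 * u n - u (n - 1) ≤ 4) :
    ∀ k : ℕ, ∀ n : ℤ, 4 < u n → u n + k ≤ u (n - k) := by
  intro k
  induction k with
  | zero => intro n h; simp
  | succ k ih =>
    intro n h
    have h1 := (hgu n).2
    have h2 : u n + 1 ≤ u (n - 1) := by omega
    have h3 : 4 < u (n - 1) := by omega
    have := ih (n - 1) h3
    have heq : n - ((k : ℤ) + 1) = n - 1 - k := by ring
    push_cast
    rw [heq]
    omega

/-- Let `g = 2 - u` and `h = -2u⁻¹ + 5 - 2u`. If `u ∈ ℓ^∞(ℤ,ℤ)` satisfies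
`0 ≤ (g·u)_n = 2 u_n - u (n-1) ≤ 4` for all `n`, then `0 ≤ u_n ≤ 4` for all `n`. -/
theorem stmt9 (u : ℤ → ℤ) (hbdd : ∃ C : ℤ, ∀ n, |u n| ≤ C)
    (hgu : ∀ n : ℤ, 0 ≤ 2 * u n - u (n - 1) ∧ 2 * u n - u (n - 1) ≤ 4) :
    ∀ n : ℤ, 0 ≤ u n ∧ u n ≤ 4 := by
  obtain ⟨C, hC⟩ := hbdd
  intro n
  constructor
  · by_contra h
    push_neg at h
    have := aux_low u hgu (2 * C + 1).toNat n h
    have hk : ((2 * C + 1).toNat : ℤ) = 2 * C + 1 := by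
      have := hC n; have := abs_nonneg (u n); omega
    rw [hk] at this
    have := hC (n - (2 * C + 1))
    have := hC n
    simp [abs_le] at *
    omega
  · by_contra h
    push_neg at h
    have := aux_high u hgu (2 * C + 1).toNat n h
    have hk : ((2 * C + 1).toNat : ℤ) = 2 * C + 1 := by
      have := hC n; have := abs_nonneg (u n); omega
    rw [hk] at this
    have := hC (n - (2 * C + 1))
    have := hC n
    simp [abs_le] at *
    omega
end

section
/- Let h ∈ R_d be expansive and ξ_h : ℓ^∞(Z^d,Z) → T^{Z^d} defined by ξ_h(v) = (w^h·v) mod 1. Then ker ξ_h ∩ ℓ^1(Z^d,Z) = h · R_d, the set of integral Laurent polynomial multiples of h. -/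
lemma keyA {d : ℕ} (h : (Fin d → ℤ) →₀ ℤ) (w : (Fin d → ℤ) → ℝ)
    (hhw : ∀ n : Fin d → ℤ,
      (∑ j ∈ h.support, (h j : ℝ) * w (n - j)) = if n = 0 then 1 else 0)
    (q : (Fin d → ℤ) →₀ ℤ) (n : Fin d → ℤ) :
    ∑ k ∈ h.support, (h k : ℝ) * ∑ j ∈ q.support, (q j : ℝ) * w (n - k - j)
      = q n := by
  have step1 : ∑ k ∈ h.support, (h k : ℝ) * ∑ j ∈ q.support, (q j : ℝ) * w (n - k - j)
      = ∑ j ∈ q.support, (q j : ℝ) * ∑ k ∈ h.support, (h k : ℝ) * w (n - j - k) := by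
    simp only [Finset.mul_sum]
    rw [Finset.sum_comm]
    apply Finset.sum_congr rfl
    intro j _
    apply Finset.sum_congr rfl
    intro k _
    rw [sub_right_comm]
    ring
  rw [step1]
  have step2 : ∀ j ∈ q.support, (q j : ℝ) * ∑ k ∈ h.support, (h k : ℝ) * w (n - j - k)
      = if j = n then (q j : ℝ) else 0 := by
    intro j _
    rw [hhw (n - j)]
    rcases eq_or_ne j n with rfl | hj
    · simp
    · simp [sub_eq_zero, hj, Ne.symm hj]
  rw [Finset.sum_congr rfl step2, Finset.sum_ite_eq' q.support n (fun j => (q j : ℝ))]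
  by_cases hn : n ∈ q.support
  · simp [hn]
  · simp [hn, Finsupp.notMem_support_iff.mp hn]

/-- Let `h` be expansive (no zeros on the unit torus) with homoclinic point
`w^h ∈ ℓ¹(ℤ^d, ℝ)`, `h · w^h = δ_0`, and let `ξ_h(v) = (w^h · v) mod 1`. Then for
`v ∈ ℓ¹(ℤ^d, ℤ)` (identified with finitely supported integer functions, i.e. Laurent
polynomials) one has `v ∈ ker ξ_h ↔ v ∈ h · R_d`: every coordinate of `w^h · v` is an
integer iff `v` is an integral Laurent polynomial multiple of `h`. -/
theorem stmt12 {d : ℕ} (h : (Fin d → ℤ) →₀ ℤ)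
    (hexp : ∀ z : Fin d → ℂ, (∀ i, ‖z i‖ = 1) →
      ∑ j ∈ h.support, (h j : ℂ) * ∏ i, z i ^ (j i) ≠ 0)
    (w : (Fin d → ℤ) → ℝ) (hw : Summable fun j => |w j|)
    (hhw : ∀ n : Fin d → ℤ,
      (∑ j ∈ h.support, (h j : ℝ) * w (n - j)) = if n = 0 then 1 else 0)
    (v : (Fin d → ℤ) →₀ ℤ) :
    (∀ n : Fin d → ℤ, ∃ m : ℤ,
        (∑ j ∈ v.support, (v j : ℝ) * w (n - j)) = (m : ℝ)) ↔
      ∃ q : (Fin d → ℤ) →₀ ℤ, ∀ n : Fin d → ℤ,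
        v n = ∑ k ∈ h.support, h k * q (n - k) := by
  constructor
  · intro hv
    -- choose integer values
    set f : (Fin d → ℤ) → ℝ := fun n => ∑ j ∈ v.support, (v j : ℝ) * w (n - j) with hf
    have hws : Summable w := (Summable.of_abs hw)
    have hten : Filter.Tendsto f Filter.cofinite (nhds 0) := by
      have : Filter.Tendsto f Filter.cofinite (nhds (∑ j ∈ v.support, (0:ℝ))) := by
        apply tendsto_finset_sum
        intro j _
        have hinj : Function.Injective (fun n : Fin d → ℤ => n - j) := by
          intro a b hab
          simpa using congrArg (· + j) hab
        have h1 : Filter.Tendsto (fun n : Fin d → ℤ => w (n - j)) Filter.cofinite (nhds 0) :=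
          hws.tendsto_cofinite_zero.comp hinj.tendsto_cofinite
        simpa using h1.const_mul (v j : ℝ)
      simpa using this
    choose g hg using hv
    have hgz : ∀ᶠ n in Filter.cofinite, g n = 0 := by
      have := hten.eventually (eventually_abs_sub_lt 0 (by norm_num : (1:ℝ) > 0))
      filter_upwards [this] with n hn
      rw [hf] at hn
      have : |(g n : ℝ)| < 1 := by
        rw [← hg n]; simpa using hn
      have : |g n| < 1 := by exact_mod_cast (by push_cast; exact this : ((|g n| : ℤ) : ℝ) < 1)
      exact Int.abs_lt_one_iff.mp this
    have hfin : {n | g n ≠ 0}.Finite := Filter.eventually_cofinite.mp hgz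
    refine ⟨⟨hfin.toFinset, g, fun n => by simp [Set.Finite.mem_toFinset]⟩, ?_⟩
    intro n
    have key : ∑ k ∈ h.support, (h k : ℝ) * (g (n - k) : ℝ) = (v n : ℝ) := by
      have : ∀ k ∈ h.support, (h k : ℝ) * (g (n - k) : ℝ)
          = (h k : ℝ) * ∑ j ∈ v.support, (v j : ℝ) * w (n - k - j) := by
        intro k _
        rw [← hg (n - k)]
      rw [Finset.sum_congr rfl this, keyA h w hhw v n]
    have : ((∑ k ∈ h.support, h k * g (n - k) : ℤ) : ℝ) = ((v n : ℤ) : ℝ) := by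
      push_cast
      exact key
    have h2 : ∑ k ∈ h.support, h k * g (n - k) = v n := by exact_mod_cast this
    exact h2.symm
  · rintro ⟨q, hq⟩
    intro n
    refine ⟨q n, ?_⟩
    set S : Finset (Fin d → ℤ) := h.support.biUnion (fun k => q.support.image (k + ·)) with hS
    have hsub : v.support ⊆ S := by
      intro m hm
      rw [Finsupp.mem_support_iff] at hm
      rw [hq m] at hm
      obtain ⟨k, hk, hne⟩ := Finset.exists_ne_zero_of_sum_ne_zero hm
      have hqk : q (m - k) ≠ 0 := fun hz => hne (by simp [hz])
      have hkh : k ∈ h.support := hk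
      rw [hS]
      apply Finset.mem_biUnion.mpr
      exact ⟨k, hkh, Finset.mem_image.mpr ⟨m - k, Finsupp.mem_support_iff.mpr hqk, by abel⟩⟩
    have e1 : ∑ j ∈ v.support, (v j : ℝ) * w (n - j) = ∑ m ∈ S, (v m : ℝ) * w (n - m) := by
      apply Finset.sum_subset hsub
      intro m _ hm
      simp [Finsupp.notMem_support_iff.mp hm]
    rw [e1]
    have e2 : ∑ m ∈ S, (v m : ℝ) * w (n - m)
        = ∑ k ∈ h.support, (h k : ℝ) * ∑ m ∈ S, (q (m - k) : ℝ) * w (n - m) := by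
      have : ∀ m ∈ S, (v m : ℝ) * w (n - m)
          = ∑ k ∈ h.support, (h k : ℝ) * ((q (m - k) : ℝ) * w (n - m)) := by
        intro m _
        rw [hq m]
        push_cast
        rw [Finset.sum_mul]
        apply Finset.sum_congr rfl
        intro k _; ring
      rw [Finset.sum_congr rfl this, Finset.sum_comm]
      simp [Finset.mul_sum]
    rw [e2]
    have e3 : ∀ k ∈ h.support, ∑ m ∈ S, (q (m - k) : ℝ) * w (n - m)
        = ∑ j ∈ q.support, (q j : ℝ) * w (n - k - j) := by
      intro k hk
      have himg : q.support.image (k + ·) ⊆ S := by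
        intro m hm
        exact Finset.mem_biUnion.mpr ⟨k, hk, hm⟩
      rw [← Finset.sum_subset himg (by
        intro m _ hm
        have : q (m - k) = 0 := by
          by_contra hne
          exact hm (Finset.mem_image.mpr ⟨m - k, Finsupp.mem_support_iff.mpr hne, by abel⟩)
        simp [this])]
      rw [Finset.sum_image (by intro a _ b _ hab; exact add_left_cancel hab)]
      apply Finset.sum_congr rfl
      intro j _
      rw [add_sub_cancel_left, sub_add_eq_sub_sub]
    rw [Finset.sum_congr rfl (fun k hk => by rw [e3 k hk] :
      ∀ k ∈ h.support, (h k : ℝ) * ∑ m ∈ S, (q (m - k) : ℝ) * w (n - m)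
        = (h k : ℝ) * ∑ j ∈ q.support, (q j : ℝ) * w (n - k - j)),
      keyA h w hhw q n]
end

section
/- Let g ∈ R_d be expansive with homoclinic point w^g and δ_g > 0 the expansiveness constant of X_{g̃}. If u, v ∈ ℓ^∞(Z^d,Z) are bounded and their convolutions satisfy (g·u)_k = (g·v)_k for all k ∈ Q_{L+M}, then u_k = v_k for all k ∈ Q_L, where M depends only on g, the bound, and δ_g, and Q_K = {−K,…,K}^d. -/
private lemma summable_w_shift {d : ℕ} (w : (Fin d → ℤ) → ℝ)
    (hw : Summable fun j => |w j|) (k : Fin d → ℤ) :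
    Summable fun n => |w (k - n)| :=
  hw.comp_injective sub_right_injective

private lemma summable_of_abs_le {d : ℕ} {f h : (Fin d → ℤ) → ℝ}
    (hh : Summable h) (hb : ∀ n, |f n| ≤ h n) : Summable f :=
  summable_abs_iff.mp (Summable.of_nonneg_of_le (fun _ => abs_nonneg _) hb hh)

private lemma conv_id {d : ℕ} (g : (Fin d → ℤ) →₀ ℤ) (w : (Fin d → ℤ) → ℝ)
    (hw : Summable fun j => |w j|)
    (hgw : ∀ n : Fin d → ℤ,
      (∑ j ∈ g.support, (g j : ℝ) * w (n - j)) = if n = 0 then 1 else 0)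
    (x : (Fin d → ℤ) → ℝ) (D : ℝ) (hx : ∀ n, |x n| ≤ D) (k : Fin d → ℤ) :
    ∑' n, w (k - n) * ∑ j ∈ g.support, (g j : ℝ) * x (n - j) = x k := by
  have hsum2 : ∀ a : Fin d → ℤ, Summable fun m => w (a - m) * x m := fun a =>
    summable_of_abs_le ((summable_w_shift w hw a).mul_right D) fun m => by
      rw [abs_mul]; exact mul_le_mul_of_nonneg_left (hx m) (abs_nonneg _)
  have hsumj : ∀ (c : ℝ) (j a : Fin d → ℤ), Summable fun n => w (a - n) * (c * x (n - j)) := by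
    intro c j a
    refine summable_of_abs_le (((summable_w_shift w hw a).mul_right (|c| * D))) fun n => ?_
    rw [abs_mul, abs_mul]
    exact mul_le_mul_of_nonneg_left (mul_le_mul_of_nonneg_left (hx _) (abs_nonneg _))
      (abs_nonneg _)
  calc ∑' n, w (k - n) * ∑ j ∈ g.support, (g j : ℝ) * x (n - j)
      = ∑' n, ∑ j ∈ g.support, w (k - n) * ((g j : ℝ) * x (n - j)) :=
        tsum_congr fun n => Finset.mul_sum _ _ _
    _ = ∑ j ∈ g.support, ∑' n, w (k - n) * ((g j : ℝ) * x (n - j)) :=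
        Summable.tsum_finsetSum fun j _ => hsumj _ j k
    _ = ∑ j ∈ g.support, ∑' m, (g j : ℝ) * (w (k - j - m) * x m) := by
        refine Finset.sum_congr rfl fun j _ => ?_
        rw [← (Equiv.addRight j).tsum_eq fun n => w (k - n) * ((g j : ℝ) * x (n - j))]
        refine tsum_congr fun m => ?_
        simp only [Equiv.coe_addRight, add_sub_cancel_right, sub_add_eq_sub_sub]
        ring
    _ = ∑' m, ∑ j ∈ g.support, (g j : ℝ) * (w (k - j - m) * x m) :=
        (Summable.tsum_finsetSum fun j _ => (hsum2 (k - j)).mul_left _).symm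
    _ = ∑' m, (if k - m = 0 then 1 else 0 : ℝ) * x m := by
        refine tsum_congr fun m => ?_
        rw [← hgw (k - m), Finset.sum_mul]
        refine Finset.sum_congr rfl fun j _ => ?_
        have h3 : k - j - m = k - m - j := by ring_nf
        rw [h3]; ring
    _ = ∑' m, (if m = k then x k else 0 : ℝ) := by
        refine tsum_congr fun m => ?_
        by_cases hm : m = k
        · subst hm; simp
        · have h4 : ¬(k - m = 0) := fun h => hm (sub_eq_zero.mp h).symm
          simp [hm, h4]
    _ = x k := tsum_ite_eq k (fun _ => x k)

/-- Let `g` be expansive (no zeros on the unit torus) with homoclinic point `w^g`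
(`g·w^g = δ_0`); expansiveness gives `δ_g > 0` for `X_{g̃}`. For every bound `C` there
exists `M` (depending only on `g`, the bound and `δ_g`) such that for all `L`: if
`u, v ∈ ℓ^∞(ℤ^d,ℤ)` with `‖u‖_∞, ‖v‖_∞ ≤ C` have convolutions agreeing,
`(g·u)_k = (g·v)_k` for all `k ∈ Q_{L+M}`, then `u_k = v_k` for all `k ∈ Q_L`,
where `Q_K = {-K,…,K}^d`. -/
theorem stmt18 {d : ℕ} (g : (Fin d → ℤ) →₀ ℤ)
    (hexp : ∀ z : Fin d → ℂ, (∀ i, ‖z i‖ = 1) →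
      ∑ j ∈ g.support, (g j : ℂ) * ∏ i, z i ^ (j i) ≠ 0)
    (w : (Fin d → ℤ) → ℝ) (hw : Summable fun j => |w j|)
    (hgw : ∀ n : Fin d → ℤ,
      (∑ j ∈ g.support, (g j : ℝ) * w (n - j)) = if n = 0 then 1 else 0)
    (C : ℤ) :
    ∃ M : ℕ, ∀ L : ℕ, ∀ u v : (Fin d → ℤ) → ℤ,
      (∀ n, |u n| ≤ C) → (∀ n, |v n| ≤ C) →
      (∀ k : Fin d → ℤ, (∀ i, |k i| ≤ (L : ℤ) + (M : ℤ)) →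
        (∑ j ∈ g.support, g j * u (k - j)) = ∑ j ∈ g.support, g j * v (k - j)) →
      ∀ k : Fin d → ℤ, (∀ i, |k i| ≤ (L : ℤ)) → u k = v k := by
  classical
  set A : ℝ := ∑ j ∈ g.support, |(g j : ℝ)| with hA
  set D : ℝ := 2 * |(C : ℝ)| with hD
  clear_value A D
  set B : ℝ := A * D with hBdef
  clear_value B
  have hA0 : 0 ≤ A := by rw [hA]; exact Finset.sum_nonneg fun _ _ => abs_nonneg _
  have hD0 : 0 ≤ D := by rw [hD]; positivity
  have hB0 : 0 ≤ B := by rw [hBdef]; exact mul_nonneg hA0 hD0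
  have hε : (0:ℝ) < 1 / (B + 1) := by positivity
  -- choose finset s capturing most of the mass of |w|
  obtain ⟨s, hs⟩ : ∃ s : Finset (Fin d → ℤ), ∑' (m : {m // m ∉ s}), |w m| < 1 / (B + 1) := by
    have h := (tendsto_order.1 (tendsto_tsum_compl_atTop_zero (fun j => |w j|))).2 _ hε
    obtain ⟨s, hs⟩ := h.exists
    exact ⟨s, hs⟩
  -- tail sum as an indicator-type sum
  set h : (Fin d → ℤ) → ℝ := fun m => if m ∈ s then 0 else |w m| with hh
  clear_value h
  have hhsum : Summable h :=
    summable_of_abs_le hw fun m => by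
      by_cases hm : m ∈ s <;> simp [hh, hm, abs_abs, le_refl, abs_nonneg]
  have htail : ∑' m, h m < 1 / (B + 1) := by
    have h2 : ∑' (m : {m // m ∉ s}), |w m| = ∑' m, h m := by
      have h3 : ∑' (m : {m // m ∉ s}), |w m| = ∑' (x : ↑{m : Fin d → ℤ | m ∉ s}), |w x| := rfl
      rw [h3, tsum_subtype {m : Fin d → ℤ | m ∉ s} (fun m => |w m|)]
      exact tsum_congr fun m => by by_cases hm : m ∈ s <;> simp [hh, Set.indicator, hm]
    rwa [h2] at hs
  refine ⟨s.sup fun m => Finset.univ.sup fun i => (m i).natAbs, ?_⟩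
  set M : ℕ := s.sup fun m => Finset.univ.sup fun i => (m i).natAbs with hM
  clear_value M
  have hsM : ∀ m ∈ s, ∀ i, |m i| ≤ (M : ℤ) := by
    intro m hm i
    have h1 : (Finset.univ.sup fun i => (m i).natAbs) ≤ M := by
      rw [hM]
      exact Finset.le_sup (f := fun m => Finset.univ.sup fun i => (m i).natAbs) hm
    have h2 : (m i).natAbs ≤ Finset.univ.sup fun i => (m i).natAbs :=
      Finset.le_sup (f := fun i => (m i).natAbs) (Finset.mem_univ i)
    rw [Int.abs_eq_natAbs]
    clear hM
    omega
  clear hM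
  intro L u v hu hv hconv k hk
  obtain ⟨x, hxdef⟩ : ∃ x : (Fin d → ℤ) → ℝ, ∀ n, x n = (u n : ℝ) - (v n : ℝ) :=
    ⟨_, fun _ => rfl⟩
  have hx : ∀ n, |x n| ≤ D := by
    intro n
    have h1 := hu n; have h2 := hv n
    have h3 : |u n - v n| ≤ 2 * |C| := by
      simp only [Int.abs_eq_natAbs] at h1 h2 ⊢
      omega
    have h4 : |x n| = |((u n - v n : ℤ) : ℝ)| := by
      rw [hxdef]; push_cast; ring_nf
    rw [h4]
    calc |((u n - v n : ℤ) : ℝ)| ≤ ((2 * |C| : ℤ) : ℝ) := by exact_mod_cast h3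
      _ = D := by rw [hD]; push_cast; ring
  obtain ⟨y, hy⟩ : ∃ y : (Fin d → ℤ) → ℝ,
      ∀ n, y n = ∑ j ∈ g.support, (g j : ℝ) * x (n - j) := ⟨_, fun _ => rfl⟩
  have hyB : ∀ n, |y n| ≤ B := by
    intro n
    rw [hy]
    calc |∑ j ∈ g.support, (g j : ℝ) * x (n - j)|
        ≤ ∑ j ∈ g.support, |(g j : ℝ) * x (n - j)| := Finset.abs_sum_le_sum_abs _ _
      _ ≤ ∑ j ∈ g.support, |(g j : ℝ)| * D := Finset.sum_le_sum fun j _ => by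
          rw [abs_mul]; exact mul_le_mul_of_nonneg_left (hx _) (abs_nonneg _)
      _ = B := by rw [hBdef, hA, Finset.sum_mul]
  have hy0 : ∀ n : Fin d → ℤ, (∀ i, |n i| ≤ (L : ℤ) + (M : ℤ)) → y n = 0 := by
    intro n hn
    have h1 := hconv n hn
    rw [hy]
    have hxx : ∀ j, x (n - j) = (u (n - j) : ℝ) - (v (n - j) : ℝ) := fun j => hxdef _
    simp only [hxx]
    have h5 : (∑ j ∈ g.support, (g j : ℝ) * ((u (n - j) : ℝ) - (v (n - j) : ℝ)))
        = ((∑ j ∈ g.support, g j * u (n - j) : ℤ) : ℝ)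
          - ((∑ j ∈ g.support, g j * v (n - j) : ℤ) : ℝ) := by
      push_cast
      rw [← Finset.sum_sub_distrib]
      exact Finset.sum_congr rfl fun j _ => by ring
    rw [h5, h1]; ring
  -- key pointwise bound
  have hkey : ∀ n, |w (k - n) * y n| ≤ B * h (k - n) := by
    intro n
    by_cases hn : ∀ i, |n i| ≤ (L : ℤ) + (M : ℤ)
    · rw [hy0 n hn]
      simp only [mul_zero, abs_zero]
      refine mul_nonneg hB0 ?_
      by_cases hm : k - n ∈ s <;> simp [hh, hm, abs_nonneg]
    · push_neg at hn
      obtain ⟨i, hi⟩ := hn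
      have hks : k - n ∉ s := by
        intro hmem
        have h6 := hsM _ hmem i
        have hki := hk i
        simp only [Pi.sub_apply] at h6
        rw [Int.abs_eq_natAbs] at h6 hki hi
        omega
      rw [show h (k - n) = |w (k - n)| from by simp [hh, hks]]
      rw [abs_mul]
      calc |w (k - n)| * |y n| ≤ |w (k - n)| * B :=
            mul_le_mul_of_nonneg_left (hyB n) (abs_nonneg _)
        _ = B * |w (k - n)| := mul_comm _ _
  have hsum_rhs : Summable fun n => B * h (k - n) :=
    ((hhsum.comp_injective (sub_right_injective : Function.Injective (k - ·))).mul_left B)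
  have hsum_f : Summable fun n => w (k - n) * y n := summable_of_abs_le hsum_rhs hkey
  -- the identity
  have hid : ∑' n, w (k - n) * y n = x k := by
    have := conv_id g w hw hgw x D hx k
    rw [← this]
    exact tsum_congr fun n => by rw [hy]
  have hxk : |x k| < 1 := by
    have h1 : |x k| ≤ ∑' n, B * h (k - n) := by
      rw [← hid]
      have habs : Summable fun n => |w (k - n) * y n| := summable_abs_iff.mpr hsum_f
      calc |∑' n, w (k - n) * y n| ≤ ∑' n, |w (k - n) * y n| := by
            have hnorm := norm_tsum_le_tsum_norm (f := fun n => w (k - n) * y n)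
              (by simpa only [Real.norm_eq_abs] using habs)
            simpa only [Real.norm_eq_abs] using hnorm
        _ ≤ ∑' n, B * h (k - n) := habs.tsum_le_tsum hkey hsum_rhs
    have h2 : ∑' n, B * h (k - n) = B * ∑' m, h m := by
      rw [tsum_mul_left]
      congr 1
      exact (Equiv.subLeft k).tsum_eq h
    have h3 : B * ∑' m, h m < 1 := by
      calc B * ∑' m, h m ≤ B * (1 / (B + 1)) :=
            mul_le_mul_of_nonneg_left (le_of_lt htail) hB0
        _ < 1 := by rw [mul_one_div, div_lt_one (by linarith)]; linarith
    rw [h2] at h1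
    linarith
  have h5 : |((u k - v k : ℤ) : ℝ)| < 1 := by
    have h6 : ((u k - v k : ℤ) : ℝ) = x k := by
      rw [hxdef]; push_cast; ring
    rw [h6]; exact hxk
  have h7 : |u k - v k| < 1 := by exact_mod_cast h5
  rw [Int.abs_eq_natAbs] at h7
  omega
end
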